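/- Let (R,B) be a ℤ-based rng and B' ⊆ B a closed subset. Then the ℤ-span of B ∖ B' is a module over the subring spanned by B' with respect to the multiplication of R; that is, for every b ∈ B' and every m ∈ B ∖ B', the product b·m lies in the ℤ-span of B ∖ B'. -/

import Mathlib

open scoped BigOperators

/-- Let `(R,B)` be a `ℤ`-based rng and `B' ⊆ B` a closed
subset.  Then the `ℤ`-span of `B ∖ B'` is a module over the subring spanned by
`B'`: for every `i ∈ B'` and `j ∉ B'`, the product `b i * b j` lies in the
`ℤ`-span of the basis elements outside `B'`. -/
theorem zBasedRng_complement_of_closed_subset_is_module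
    {n : ℕ} (A : Type*) [CommRing A] [Algebra ℂ A]
    (b : Module.Basis (Fin n) ℂ A) (N : Fin n → Fin n → Fin n → ℤ) (σ : Fin n → Fin n)
    (hmul : ∀ i j, b i * b j = ∑ m, (N i j m : ℂ) • b m)
    (hσ : ∀ i, σ (σ i) = i)
    (hσN : ∀ i j m, N (σ i) (σ j) m = N i j (σ m))
    (hτ : ∀ i j, (∑ m, (starRingEnd ℂ) (b.repr 1 m) * (N (σ i) j m : ℂ)) =
      if i = j then (1 : ℂ) else 0)
    (he : ∀ j, (starRingEnd ℂ) (b.repr 1 (σ j)) = b.repr 1 j)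
    (B' : Set (Fin n))
    (hclosed : ∀ x ∈ Submodule.span ℤ (⇑b '' B'), ∀ y ∈ Submodule.span ℤ (⇑b '' B'),
      x * y ∈ Submodule.span ℤ (⇑b '' B')) :
    ∀ i ∈ B', ∀ j ∉ B', b i * b j ∈ Submodule.span ℤ (⇑b '' B'ᶜ) := by
  classical
  -- coefficients of products
  have hrepr : ∀ i j m, b.repr (b i * b j) m = (N i j m : ℂ) := by
    intro i j m
    rw [hmul i j]
    exact congrFun (b.repr_sum_self _) m
  have hcommC : ∀ i j m, (N i j m : ℂ) = (N j i m : ℂ) := by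
    intro i j m
    rw [← hrepr i j m, ← hrepr j i m, mul_comm (b i) (b j)]
  have hcomm : ∀ i j m, N i j m = N j i m := fun i j m => by exact_mod_cast hcommC i j m
  have hrepr3 : ∀ p i j r, b.repr (b p * (b i * b j)) r
      = ∑ k, (N i j k : ℂ) * (N p k r : ℂ) := by
    intro p i j r
    have e1 : b p * (b i * b j) = ∑ k, (N i j k : ℂ) • (b p * b k) := by
      rw [hmul i j, Finset.mul_sum]
      exact Finset.sum_congr rfl fun k _ => mul_smul_comm _ _ _
    rw [e1, map_sum, Finset.sum_apply']
    exact Finset.sum_congr rfl fun k _ => by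
      rw [map_smul, Finsupp.smul_apply, hrepr, smul_eq_mul]
  have hassocC : ∀ p i j r, (∑ k, (N i j k : ℂ) * (N p k r : ℂ))
      = ∑ k, (N p i k : ℂ) * (N k j r : ℂ) := by
    intro p i j r
    have h1 := hrepr3 p i j r
    have h2 := hrepr3 j p i r
    have e : b p * (b i * b j) = b j * (b p * b i) := by ring
    rw [e, h2] at h1
    rw [← h1]
    exact Finset.sum_congr rfl fun k _ => by rw [hcommC j k r]
  have hassocZ : ∀ p i j r, (∑ k, N i j k * N p k r) = ∑ k, N p i k * N k j r := by
    intro p i j r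
    exact_mod_cast hassocC p i j r
  -- tau orthogonality in convenient form
  have hτ' : ∀ k j, (∑ r, (starRingEnd ℂ) (b.repr 1 r) * (N k j r : ℂ))
      = if σ k = j then (1 : ℂ) else 0 := by
    intro k j
    have h := hτ (σ k) j
    simp only [hσ] at h
    exact h
  -- the transpose identity
  have htrC : ∀ i j m, (N i j m : ℂ) = (N (σ m) i (σ j) : ℂ) := by
    intro i j m
    calc (N i j m : ℂ)
        = ∑ k, (N i j k : ℂ) * (if m = k then 1 else 0) := by simp
      _ = ∑ k, (N i j k : ℂ) * (∑ r, (starRingEnd ℂ) (b.repr 1 r) * (N (σ m) k r : ℂ)) := by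
          exact Finset.sum_congr rfl fun k _ => by rw [← hτ m k]
      _ = ∑ k, ∑ r, (starRingEnd ℂ) (b.repr 1 r) * ((N i j k : ℂ) * (N (σ m) k r : ℂ)) := by
          refine Finset.sum_congr rfl fun k _ => ?_
          rw [Finset.mul_sum]
          exact Finset.sum_congr rfl fun r _ => by ring
      _ = ∑ r, (starRingEnd ℂ) (b.repr 1 r) * (∑ k, (N i j k : ℂ) * (N (σ m) k r : ℂ)) := by
          rw [Finset.sum_comm]
          exact Finset.sum_congr rfl fun r _ => (Finset.mul_sum _ _ _).symm
      _ = ∑ r, (starRingEnd ℂ) (b.repr 1 r) * (∑ k, (N (σ m) i k : ℂ) * (N k j r : ℂ)) := by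
          exact Finset.sum_congr rfl fun r _ => by rw [hassocC (σ m) i j r]
      _ = ∑ r, ∑ k, (N (σ m) i k : ℂ) * ((starRingEnd ℂ) (b.repr 1 r) * (N k j r : ℂ)) := by
          refine Finset.sum_congr rfl fun r _ => ?_
          rw [Finset.mul_sum]
          exact Finset.sum_congr rfl fun k _ => by ring
      _ = ∑ k, (N (σ m) i k : ℂ) * (∑ r, (starRingEnd ℂ) (b.repr 1 r) * (N k j r : ℂ)) := by
          rw [Finset.sum_comm]
          exact Finset.sum_congr rfl fun k _ => (Finset.mul_sum _ _ _).symm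
      _ = ∑ k, (N (σ m) i k : ℂ) * (if σ k = j then 1 else 0) := by
          exact Finset.sum_congr rfl fun k _ => by rw [hτ' k j]
      _ = (N (σ m) i (σ j) : ℂ) := by
          have hiff : ∀ k, (σ k = j) ↔ (k = σ j) :=
            fun k => ⟨fun h => by rw [← h, hσ], fun h => by rw [h, hσ]⟩
          simp [hiff]
  have htrZ : ∀ i j m, N i j m = N (σ m) i (σ j) := fun i j m => by
    exact_mod_cast htrC i j m
  have htr : ∀ i j m, N i j m = N m (σ i) j := by
    intro i j m
    have h2 := hσN m (σ i) (σ j)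
    simp only [hσ] at h2
    rw [htrZ i j m, h2]
  -- transpose forms
  have T1 : ∀ i r m, N (σ i) m r = N i r m := by
    intro i r m
    have h := htr (σ i) m r
    simp only [hσ] at h
    rw [h]
    exact hcomm r i m
  have T2 : ∀ i r m, N (σ i) r m = N i m r := by
    intro i r m
    have h := htr (σ i) r m
    simp only [hσ] at h
    rw [h]
    exact hcomm m i r
  -- normality: equality of diagonal sums
  have hdiag : ∀ i m, (∑ r, (N i r m)^2) = ∑ r, (N i m r)^2 := by
    intro i m
    have h1 : (∑ k, N (σ i) m k * N i k m) = ∑ k, N i (σ i) k * N k m m :=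
      hassocZ i (σ i) m m
    have h2 : (∑ k, N i m k * N (σ i) k m) = ∑ k, N (σ i) i k * N k m m :=
      hassocZ (σ i) i m m
    calc (∑ r, (N i r m)^2)
        = ∑ k, N (σ i) m k * N i k m := by
          exact Finset.sum_congr rfl fun k _ => by rw [T1 i k m, sq]
      _ = ∑ k, N i (σ i) k * N k m m := h1
      _ = ∑ k, N (σ i) i k * N k m m :=
          Finset.sum_congr rfl fun k _ => by rw [hcomm i (σ i) k]
      _ = ∑ k, N i m k * N (σ i) k m := h2.symm
      _ = ∑ r, (N i m r)^2 := by
          exact Finset.sum_congr rfl fun k _ => by rw [T2 i k m, sq]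
  -- closedness in coefficients
  have hspan0 : ∀ x ∈ Submodule.span ℤ (⇑b '' B'), ∀ r, r ∉ B' → b.repr x r = 0 := by
    intro x hx
    induction hx using Submodule.span_induction with
    | mem x hxs =>
        obtain ⟨s, hs, rfl⟩ := hxs
        intro r hr
        rw [b.repr_self, Finsupp.single_apply, if_neg]
        intro h; exact hr (h ▸ hs)
    | zero => intro r _; simp
    | add x y hx' hy' ihx ihy =>
        intro r hr
        rw [map_add, Finsupp.add_apply, ihx r hr, ihy r hr, add_zero]
    | smul a x hx' ih =>
        intro r hr
        rw [map_zsmul, Finsupp.smul_apply, ih r hr, smul_zero]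
  have hcl : ∀ p ∈ B', ∀ q ∈ B', ∀ r, r ∉ B' → N p q r = 0 := by
    intro p hp q hq r hr
    have hxp : b p ∈ Submodule.span ℤ (⇑b '' B') := Submodule.subset_span ⟨p, hp, rfl⟩
    have hxq : b q ∈ Submodule.span ℤ (⇑b '' B') := Submodule.subset_span ⟨q, hq, rfl⟩
    have h := hspan0 _ (hclosed _ hxp _ hxq) r hr
    rw [hrepr] at h
    exact_mod_cast h
  -- main argument
  intro i hi j hj
  have hzero : ∀ m ∈ B', N i j m = 0 := by
    have hsplit : ∀ m, (∑ r, (N i r m)^2)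
        = (∑ r ∈ Finset.filter (fun x => x ∈ B') Finset.univ, (N i r m)^2)
          + ∑ r ∈ Finset.filter (fun x => ¬ x ∈ B') Finset.univ, (N i r m)^2 :=
      fun m => (Finset.sum_filter_add_sum_filter_not Finset.univ _ _).symm
    have hR : ∀ m ∈ Finset.filter (fun x => x ∈ B') Finset.univ,
        (∑ r, (N i m r)^2) = ∑ r ∈ Finset.filter (fun x => x ∈ B') Finset.univ, (N i m r)^2 := by
      intro m hm
      have hm' : m ∈ B' := (Finset.mem_filter.mp hm).2
      refine (Finset.sum_subset (Finset.subset_univ _) ?_).symm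
      intro r _ hrΩ
      have hr : r ∉ B' := by simpa using hrΩ
      rw [hcl i hi m hm' r hr]
      ring
    have key : (∑ m ∈ Finset.filter (fun x => x ∈ B') Finset.univ,
        ∑ r ∈ Finset.filter (fun x => ¬ x ∈ B') Finset.univ, (N i r m)^2) = 0 := by
      have h1 : (∑ m ∈ Finset.filter (fun x => x ∈ B') Finset.univ, ∑ r, (N i r m)^2)
          = ∑ m ∈ Finset.filter (fun x => x ∈ B') Finset.univ, ∑ r, (N i m r)^2 :=
        Finset.sum_congr rfl fun m _ => hdiag i m
      have h2 : (∑ m ∈ Finset.filter (fun x => x ∈ B') Finset.univ, ∑ r, (N i m r)^2)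
          = ∑ m ∈ Finset.filter (fun x => x ∈ B') Finset.univ,
              ∑ r ∈ Finset.filter (fun x => x ∈ B') Finset.univ, (N i m r)^2 :=
        Finset.sum_congr rfl hR
      have h3 : (∑ m ∈ Finset.filter (fun x => x ∈ B') Finset.univ,
            ∑ r ∈ Finset.filter (fun x => x ∈ B') Finset.univ, (N i m r)^2)
          = ∑ m ∈ Finset.filter (fun x => x ∈ B') Finset.univ,
              ∑ r ∈ Finset.filter (fun x => x ∈ B') Finset.univ, (N i r m)^2 :=
        Finset.sum_comm
      have h4 : (∑ m ∈ Finset.filter (fun x => x ∈ B') Finset.univ,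
            ((∑ r ∈ Finset.filter (fun x => x ∈ B') Finset.univ, (N i r m)^2)
              + ∑ r ∈ Finset.filter (fun x => ¬ x ∈ B') Finset.univ, (N i r m)^2))
          = ∑ m ∈ Finset.filter (fun x => x ∈ B') Finset.univ,
              ∑ r ∈ Finset.filter (fun x => x ∈ B') Finset.univ, (N i r m)^2 :=
        (Finset.sum_congr rfl fun m _ => (hsplit m).symm).trans (h1.trans (h2.trans h3))
      rw [Finset.sum_add_distrib] at h4
      linarith
    intro m hm
    have hmΩ : m ∈ Finset.filter (fun x => x ∈ B') Finset.univ := by simp [hm]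
    have hjc : j ∈ Finset.filter (fun x => ¬ x ∈ B') Finset.univ := by simp [hj]
    have h6 := (Finset.sum_eq_zero_iff_of_nonneg
      (fun m _ => Finset.sum_nonneg fun r _ => sq_nonneg _)).mp key m hmΩ
    have h7 := (Finset.sum_eq_zero_iff_of_nonneg (fun r _ => sq_nonneg _)).mp h6 j hjc
    exact sq_eq_zero_iff.mp h7
  rw [hmul]
  refine Submodule.sum_mem _ fun m _ => ?_
  by_cases hm : m ∈ B'
  · rw [hzero m hm]
    simpa using Submodule.zero_mem _
  · rw [Int.cast_smul_eq_zsmul]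
    exact Submodule.smul_mem _ _ (Submodule.subset_span ⟨m, hm, rfl⟩)
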